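/- If ρ is a left eigenvector of a complex n×n matrix B with eigenvalue λ, and λ is a simple eigenvalue (algebraic multiplicity 1) with right eigenvector u, then ρ(u) ≠ 0. -/

import Mathlib

open Matrix

open Polynomial

noncomputable def shiftHom (lam : ℂ) : ℂ[X] →+* ℂ[X] := (aeval (X + C lam)).toRingHom

lemma shiftHom_apply (lam : ℂ) (p : ℂ[X]) : shiftHom lam p = p.comp (X + C lam) := by
  simp [shiftHom, aeval_def, Polynomial.comp]

lemma charpoly_shift {n : ℕ} (B : Matrix (Fin n) (Fin n) ℂ) (lam : ℂ) :
    (B - lam • 1).charpoly = (B.charpoly).comp (X + C lam) := by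
  rw [← shiftHom_apply, Matrix.charpoly, Matrix.charpoly, RingHom.map_det]
  congr 1
  ext i j
  by_cases h : i = j <;>
    simp [h, charmatrix_apply, shiftHom, Matrix.one_apply, Matrix.smul_apply,
      Matrix.sub_apply, mul_comm]
  ring

/-- If λ is a simple eigenvalue (algebraic multiplicity 1) of B with
right eigenvector u and left eigenvector ρ, then ρ(u) ≠ 0. -/
theorem stmt_7 {n : ℕ} (B : Matrix (Fin n) (Fin n) ℂ) (lam : ℂ)
    (hsimple : (Matrix.charpoly B).rootMultiplicity lam = 1)
    (u : Fin n → ℂ) (hu : u ≠ 0) (hBu : B.mulVec u = lam • u)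
    (ρ : Fin n → ℂ) (hρ : ρ ≠ 0) (hρB : Matrix.vecMul ρ B = lam • ρ) :
    dotProduct ρ u ≠ 0 := by
  set A : Matrix (Fin n) (Fin n) ℂ := B - lam • 1 with hA
  set ψ : Module.End ℂ (Fin n → ℂ) := Matrix.toLin' A with hψ
  -- charpoly of ψ equals charpoly of A
  have hcp : ψ.charpoly = A.charpoly := by
    rw [← LinearMap.charpoly_toMatrix ψ (Pi.basisFun ℂ (Fin n))]
    congr 1
    rw [hψ, LinearMap.toMatrix_eq_toMatrix', LinearMap.toMatrix'_toLin']
  -- the maximal generalized eigenspace of ψ at 0 has dimension 1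
  have hfin : Module.finrank ℂ (ψ.maxGenEigenspace 0) = 1 := by
    have h1 : A.charpoly.rootMultiplicity 0 = 1 := by
      rw [hA, charpoly_shift, ← rootMultiplicity_eq_rootMultiplicity]; exact hsimple
    rw [LinearMap.finrank_maxGenEigenspace_zero_eq, hcp, ← rootMultiplicity_eq_natTrailingDegree']
    exact h1
  -- u is in the kernel of ψ
  have hψu : ψ u = 0 := by
    simp [hψ, hA, Matrix.toLin'_apply, Matrix.sub_mulVec, hBu, Matrix.smul_mulVec,
      Matrix.one_mulVec]
  -- kernel of ψ is contained in the generalized eigenspace, so has finrank 1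
  have hker_le : ∀ k : ℕ, LinearMap.ker (ψ ^ k) ≤ ψ.maxGenEigenspace 0 := by
    intro k x hx
    rw [Module.End.mem_maxGenEigenspace]
    exact ⟨k, by simpa using hx⟩
  have hkerfin : Module.finrank ℂ (LinearMap.ker ψ) = 1 := by
    have hle : Module.finrank ℂ (LinearMap.ker ψ) ≤ 1 := by
      rw [← hfin]
      exact Submodule.finrank_mono (by simpa using hker_le 1)
    have hpos : 0 < Module.finrank ℂ (LinearMap.ker ψ) := by
      rw [Module.finrank_pos_iff_exists_ne_zero]
      exact ⟨⟨u, by simpa [LinearMap.mem_ker] using hψu⟩, by simpa [Subtype.ext_iff] using hu⟩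
    omega
  -- kernel of ψ² equals kernel of ψ
  have hsub : LinearMap.ker ψ ≤ LinearMap.ker (ψ ^ 2) := by
    intro x hx
    rw [LinearMap.mem_ker] at hx ⊢
    simp [pow_two, hx]
  have hker2 : LinearMap.ker ψ = LinearMap.ker (ψ ^ 2) :=
    Submodule.eq_of_le_of_finrank_le hsub
      (by rw [hkerfin]; exact le_trans (Submodule.finrank_mono (hker_le 2)) hfin.le)
  -- the linear functional given by ρ
  set g : (Fin n → ℂ) →ₗ[ℂ] ℂ :=
    { toFun := fun v => dotProduct ρ v
      map_add' := fun x y => dotProduct_add ρ x y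
      map_smul' := fun c x => by simp [dotProduct_smul] } with hg
  intro hcontra
  -- ρ annihilates the range of ψ
  have hρA : Matrix.vecMul ρ A = 0 := by
    rw [hA, Matrix.vecMul_sub, hρB]
    have : Matrix.vecMul ρ (lam • 1) = lam • ρ := by
      ext j; simp [Matrix.vecMul, dotProduct, Matrix.smul_apply, Matrix.one_apply,
        mul_comm]
    rw [this, sub_self]
  have hrange_le : LinearMap.range ψ ≤ LinearMap.ker g := by
    rintro x ⟨v, rfl⟩
    rw [LinearMap.mem_ker]
    show dotProduct ρ (ψ v) = 0
    rw [hψ, Matrix.toLin'_apply, Matrix.dotProduct_mulVec, hρA, zero_dotProduct]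
  -- ker g is a proper subspace
  have hg_ne : LinearMap.ker g < ⊤ := by
    obtain ⟨i, hi⟩ := Function.ne_iff.mp hρ
    refine lt_top_iff_ne_top.mpr fun htop => hi ?_
    have : g (Pi.single i 1) = 0 := by
      rw [← LinearMap.mem_ker, htop]; trivial
    simpa [hg, dotProduct_single] using this
  have hkerg_lt : Module.finrank ℂ (LinearMap.ker g) < n := by
    have := Submodule.finrank_lt (K := ℂ) (V := Fin n → ℂ) hg_ne.ne
    rwa [Module.finrank_fin_fun] at this
  -- rank-nullity
  have hrn : Module.finrank ℂ (LinearMap.range ψ) + 1 = n := by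
    have := LinearMap.finrank_range_add_finrank_ker ψ
    rwa [hkerfin, Module.finrank_fin_fun] at this
  have hrange_eq : LinearMap.range ψ = LinearMap.ker g :=
    Submodule.eq_of_le_of_finrank_le hrange_le (by omega)
  -- u lies in range ψ, hence is the image of a generalized eigenvector
  have hu_mem : u ∈ LinearMap.range ψ := by
    rw [hrange_eq, LinearMap.mem_ker]
    exact hcontra
  obtain ⟨w, hw⟩ := hu_mem
  have hw2 : w ∈ LinearMap.ker (ψ ^ 2) := by
    rw [LinearMap.mem_ker, pow_two, Module.End.mul_apply, hw, hψu]
  rw [← hker2, LinearMap.mem_ker] at hw2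
  exact hu (by rw [← hw, hw2])
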